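/- Let D ⊆ ℝ be nonempty with finite supremum s_D, and let ν be a Borel probability measure supported on D with finite mean μ. Let X = (X_1,…,X_n) and Z = (Z_1,…,Z_n) be independent i.i.d. samples with law ν, and let U = (U_1,…,U_n) be i.i.d. Uniform(0,1) independent of X. Then for any T : ℝⁿ → ℝ and any α ∈ (0,1): P_X( P_U(b_{D,T}(X,U) ≥ μ) ≤ α ) ≤ P_X( P_Z(T(Z) ≤ T(X)) ≤ α ), where P_U(b_{D,T}(X,U) ≥ μ) denotes the conditional probability over U with X fixed, and P_Z(T(Z) ≤ T(X)) the conditional probability over Z with X fixed. -/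

import Mathlib

open MeasureTheory Set

/-- The sorted rearrangement (order statistics) of a finite real vector:
`sortedVec x i` is the (i+1)-st order statistic `x_{(i+1)}` (0-indexed). -/
noncomputable def sortedVec {n : ℕ} (x : Fin n → ℝ) : Fin n → ℝ :=
  x ∘ ⇑(Tuple.sort x)

/-- The induced mean `m(x, ℓ) = s - ∑ ℓ_{(i)} (x_{(i+1)} - x_{(i)})`, with `x_{(n+1)} := s`. -/
noncomputable def inducedMean {n : ℕ} (s : ℝ) (x ℓ : Fin n → ℝ) : ℝ :=
  s - ∑ i : Fin n, sortedVec ℓ i * ((Fin.snoc (sortedVec x) s : Fin (n+1) → ℝ) i.succ - sortedVec x i)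

/-- `S_{D,T}(x) = {y ∈ Dⁿ : T y ≤ T x}`. -/
def SsetD {n : ℕ} (D : Set ℝ) (T : (Fin n → ℝ) → ℝ) (x : Fin n → ℝ) : Set (Fin n → ℝ) :=
  {y | (∀ i, y i ∈ D) ∧ T y ≤ T x}

/-- `b_{D,T}(x, u) = sup_{z ∈ S_{D,T}(x)} m_{sup D}(z, u)`. -/
noncomputable def bfun {n : ℕ} (D : Set ℝ) (T : (Fin n → ℝ) → ℝ) (x u : Fin n → ℝ) : ℝ :=
  sSup ((fun z => inducedMean (sSup D) z u) '' SsetD D T x)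

/-- The uniform probability measure on `[0,1]`. -/
noncomputable def unif01 : Measure ℝ := volume.restrict (Icc (0:ℝ) 1)

/-- The law of an i.i.d. sample of size `n` from Uniform(0,1). -/
noncomputable def unifPi (n : ℕ) : Measure (Fin n → ℝ) := Measure.pi fun _ => unif01

/-- The `p`-quantile of the random variable `Y` under `μ`:
`Q(p, Y) = inf {y : P(Y ≤ y) ≥ p}`. -/
noncomputable def rquantile {Ω : Type*} [MeasurableSpace Ω] (μ : Measure Ω)
    (Y : Ω → ℝ) (p : ℝ) : ℝ :=
  sInf {y : ℝ | ENNReal.ofReal p ≤ μ {ω | Y ω ≤ y}}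

/-- The upper confidence bound `b^α_{D,T}(x) = Q(1 - α, b_{D,T}(x, U))`, `U` i.i.d. Uniform(0,1). -/
noncomputable def ucb {n : ℕ} (D : Set ℝ) (T : (Fin n → ℝ) → ℝ) (α : ℝ)
    (x : Fin n → ℝ) : ℝ :=
  rquantile (unifPi n) (bfun D T x) (1 - α)

/-- The stairstep function `G_{x,ℓ}` with top value at `s`. -/
noncomputable def stairstep {n : ℕ} (s : ℝ) (x ℓ : Fin n → ℝ) (t : ℝ) : ℝ :=
  if s ≤ t then 1 else sSup ({0} ∪ (sortedVec ℓ '' {i | sortedVec x i ≤ t}))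

/-- The `k`-th smallest value (1-indexed) among `m 0, …, m (L-1)`. -/
noncomputable def kthSmallest {L : ℕ} (m : Fin L → ℝ) (k : ℕ) : ℝ :=
  sInf {y : ℝ | k ≤ Nat.card {j : Fin L // m j ≤ y}}

instance : IsProbabilityMeasure unif01 := by
  constructor
  rw [unif01, Measure.restrict_apply MeasurableSet.univ, univ_inter, Real.volume_Icc]
  norm_num

lemma unif01_Ioc {c : ℝ} (hc0 : 0 ≤ c) (hc1 : c ≤ 1) :
    unif01 (Ioc 0 c) = ENNReal.ofReal c := by
  rw [unif01, Measure.restrict_apply measurableSet_Ioc]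
  have : Ioc 0 c ∩ Icc (0:ℝ) 1 = Ioc 0 c := by
    apply inter_eq_self_of_subset_left
    intro y hy
    exact ⟨le_of_lt hy.1, hy.2.trans hc1⟩
  rw [this, Real.volume_Ioc]
  norm_num

lemma unif01_compl_Ioc : unif01 ((Ioc (0:ℝ) 1)ᶜ) = 0 := by
  rw [unif01, Measure.restrict_apply (measurableSet_Ioc.compl)]
  have : (Ioc (0:ℝ) 1)ᶜ ∩ Icc (0:ℝ) 1 = {0} := by
    ext y
    simp only [mem_inter_iff, mem_compl_iff, mem_Ioc, mem_Icc, mem_singleton_iff]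
    constructor
    · rintro ⟨h1, h2, h3⟩
      by_contra hy
      exact h1 ⟨lt_of_le_of_ne h2 (Ne.symm hy), h3⟩
    · rintro rfl; norm_num
  rw [this, Real.volume_singleton]

lemma lowerSet_measurableSet (L : Set ℝ) (hL : ∀ p q : ℝ, p ≤ q → q ∈ L → p ∈ L) :
    MeasurableSet L := by
  rcases L.eq_empty_or_nonempty with rfl | hne
  · exact MeasurableSet.empty
  by_cases hb : BddAbove L
  · set b := sSup L with hbdef
    by_cases hbL : b ∈ L
    · have : L = Iic b := by
        ext y; constructor
        · intro hy; exact le_csSup hb hy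
        · intro hy; exact hL y b hy hbL
      rw [this]; exact measurableSet_Iic
    · have : L = Iio b := by
        ext y; constructor
        · intro hy
          rcases lt_or_eq_of_le (le_csSup hb hy) with h | h
          · exact h
          · exact absurd (show b ∈ L by rw [hbdef, ← h]; exact hy) hbL
        · intro hy
          obtain ⟨z, hz, hyz⟩ := exists_lt_of_lt_csSup hne hy
          exact hL y z hyz.le hz
      rw [this]; exact measurableSet_Iio
  · have : L = univ := by
      ext y
      simp only [mem_univ, iff_true]
      obtain ⟨z, hz, hyz⟩ := not_bddAbove_iff.1 hb y
      exact hL y z hyz.le hz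
    rw [this]; exact MeasurableSet.univ

noncomputable def Qtf (ν : Measure ℝ) (p : ℝ) : ℝ :=
  sInf {x | ENNReal.ofReal (min p 1) ≤ ν (Iic x)}

section QtfLemmas

variable {ν : Measure ℝ} [IsProbabilityMeasure ν] {s : ℝ}

lemma Qtf_set_nonempty (hs1 : ν (Iic s) = 1) (p : ℝ) :
    {x | ENNReal.ofReal (min p 1) ≤ ν (Iic x)}.Nonempty :=
  ⟨s, by rw [mem_setOf_eq, hs1]; exact ENNReal.ofReal_le_one.mpr (min_le_right p 1)⟩

lemma measure_Iic_tendsto_atBot : Filter.Tendsto (fun x : ℝ => ν (Iic x)) Filter.atBot (nhds 0) := by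
  have h := tendsto_measure_iInter_atBot (μ := ν) (s := fun x : ℝ => Iic x)
    (fun x => measurableSet_Iic.nullMeasurableSet) (fun x y hxy => Iic_subset_Iic.mpr hxy)
    ⟨0, measure_ne_top ν _⟩
  have hempty : ⋂ x : ℝ, Iic x = ∅ := by
    ext y
    simp only [mem_iInter, mem_Iic, mem_empty_iff_false, iff_false, not_forall, not_le]
    exact ⟨y - 1, by linarith⟩
  rw [hempty, measure_empty] at h
  exact h

lemma Qtf_set_bddBelow (hp : 0 < p) :
    BddBelow {x | ENNReal.ofReal (min p 1) ≤ ν (Iic x)} := by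
  have hpos : (0 : ENNReal) < ENNReal.ofReal (min p 1) :=
    ENNReal.ofReal_pos.mpr (lt_min hp one_pos)
  obtain ⟨x0, hx0⟩ := (measure_Iic_tendsto_atBot (ν := ν).eventually_lt_const hpos).exists
  refine ⟨x0, fun x hx => ?_⟩
  by_contra hlt
  push_neg at hlt
  exact absurd (le_trans hx (measure_mono (Iic_subset_Iic.mpr hlt.le))) (not_le.mpr hx0)

lemma Qtf_le_iff (hs1 : ν (Iic s) = 1) {p t : ℝ} (hp : p ∈ Ioc (0:ℝ) 1) :
    Qtf ν p ≤ t ↔ ENNReal.ofReal p ≤ ν (Iic t) := by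
  have hmin : min p 1 = p := min_eq_left hp.2
  constructor
  · intro h
    have key : ∀ k : ℕ, ENNReal.ofReal p ≤ ν (Iic (t + 1 / (k + 1))) := by
      intro k
      have hlt : Qtf ν p < t + 1 / (k + 1) := by
        have hk : (0:ℝ) < 1 / (k + 1) := by positivity
        linarith
      obtain ⟨x, hx, hxlt⟩ := exists_lt_of_csInf_lt (Qtf_set_nonempty hs1 p) hlt
      rw [mem_setOf_eq, hmin] at hx
      exact le_trans hx (measure_mono (Iic_subset_Iic.mpr hxlt.le))
    have htend : Filter.Tendsto (fun k : ℕ => ν (Iic (t + 1 / (k + 1)))) Filter.atTop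
        (nhds (ν (Iic t))) := by
      have h := tendsto_measure_iInter_atTop (μ := ν)
        (s := fun k : ℕ => Iic (t + 1 / (k + 1)))
        (fun k => measurableSet_Iic.nullMeasurableSet)
        (fun k m hkm => Iic_subset_Iic.mpr (by
          have : (1:ℝ) / (m + 1) ≤ 1 / (k + 1) := by
            apply one_div_le_one_div_of_le (by positivity)
            exact_mod_cast Nat.succ_le_succ hkm
          linarith))
        ⟨0, measure_ne_top ν _⟩
      have hinter : ⋂ k : ℕ, Iic (t + 1 / ((k:ℝ) + 1)) = Iic t := by
        ext y
        simp only [mem_iInter, mem_Iic]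
        constructor
        · intro hy
          by_contra hyt
          push_neg at hyt
          obtain ⟨k, hk⟩ := exists_nat_one_div_lt (show 0 < y - t by linarith)
          have := hy k
          linarith
        · intro hy k
          have : (0:ℝ) < 1 / (k + 1) := by positivity
          linarith
      rw [hinter] at h
      exact h
    exact ge_of_tendsto' htend key
  · intro h
    apply csInf_le (Qtf_set_bddBelow hp.1)
    rw [mem_setOf_eq, hmin]
    exact h

lemma Qtf_le_sup (hs1 : ν (Iic s) = 1) {p : ℝ} (hp : p ∈ Ioc (0:ℝ) 1) : Qtf ν p ≤ s :=
  (Qtf_le_iff hs1 hp).mpr (by rw [hs1]; exact ENNReal.ofReal_le_one.mpr hp.2)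

lemma Qtf_monotoneOn (hs1 : ν (Iic s) = 1) : MonotoneOn (Qtf ν) (Ioi (0:ℝ)) := by
  intro p hp q hq hpq
  apply csInf_le_csInf (Qtf_set_bddBelow hp) (Qtf_set_nonempty hs1 q)
  intro x hx
  exact le_trans (ENNReal.ofReal_le_ofReal (min_le_min hpq le_rfl)) hx

lemma Qtf_nonpos_eq {p : ℝ} (hp : p ≤ 0) : Qtf ν p = Qtf ν 0 := by
  unfold Qtf
  congr 1
  have h1 : ENNReal.ofReal (min p 1) = 0 := ENNReal.ofReal_eq_zero.mpr (le_trans (min_le_left _ _) hp)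
  have h2 : ENNReal.ofReal (min 0 1) = 0 := by norm_num
  rw [h1, h2]

lemma Qtf_measurable (hs1 : ν (Iic s) = 1) : Measurable (Qtf ν) := by
  have hlower : ∀ a : ℝ, MeasurableSet ({p | 0 < p ∧ Qtf ν p < a} ∪ Iic 0) := by
    intro a
    apply lowerSet_measurableSet
    rintro p q hpq (⟨hq0, hqa⟩ | hq0)
    · rcases le_or_gt p 0 with hp0 | hp0
      · exact Or.inr hp0
      · exact Or.inl ⟨hp0, lt_of_le_of_lt (Qtf_monotoneOn hs1 hp0 hq0 hpq) hqa⟩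
    · exact Or.inr (le_trans hpq hq0)
  apply measurable_of_Iio
  intro a
  have : Qtf ν ⁻¹' Iio a =
      (({p | 0 < p ∧ Qtf ν p < a} ∪ Iic 0) ∩ Ioi 0) ∪
        (if Qtf ν 0 < a then Iic (0:ℝ) else ∅) := by
    ext p
    simp only [mem_preimage, mem_Iio, mem_union, mem_inter_iff, mem_setOf_eq, mem_Ioi, mem_Iic]
    constructor
    · intro hpa
      rcases le_or_gt p 0 with hp0 | hp0
      · right
        rw [Qtf_nonpos_eq hp0] at hpa
        simp [hpa, hp0]
      · exact Or.inl ⟨Or.inl ⟨hp0, hpa⟩, hp0⟩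
    · rintro (⟨(⟨_, h⟩ | h0), hp0⟩ | hif)
      · exact h
      · exact absurd h0 (not_le.mpr hp0)
      · split at hif
        · simp only [mem_Iic] at hif
          rwa [Qtf_nonpos_eq hif]
        · exact absurd hif (notMem_empty p)
  rw [this]
  apply MeasurableSet.union ((hlower a).inter measurableSet_Ioi)
  split <;> simp

end QtfLemmas


section Coupling
variable {ν : Measure ℝ} [IsProbabilityMeasure ν] {s : ℝ}

lemma Qtf_map_eq (hs1 : ν (Iic s) = 1) : Measure.map (Qtf ν) unif01 = ν := by
  haveI : IsProbabilityMeasure (Measure.map (Qtf ν) unif01) :=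
    Measure.isProbabilityMeasure_map (Qtf_measurable hs1).aemeasurable
  apply Measure.ext_of_Iic
  intro t
  rw [Measure.map_apply (Qtf_measurable hs1) measurableSet_Iic]
  set β := (ν (Iic t)).toReal with hβ
  have hβ1 : β ≤ 1 := by
    rw [hβ]
    have h1 := prob_le_one (μ := ν) (s := Iic t)
    calc (ν (Iic t)).toReal ≤ (1 : ENNReal).toReal :=
          ENNReal.toReal_mono ENNReal.one_ne_top h1
    _ = 1 := by simp
  have hβ0 : 0 ≤ β := ENNReal.toReal_nonneg
  have hXI : (Qtf ν ⁻¹' Iic t) ∩ Ioc 0 1 = Ioc 0 β := by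
    ext p
    simp only [mem_inter_iff, mem_preimage, mem_Iic, mem_Ioc]
    constructor
    · rintro ⟨hq, hp⟩
      have h2 := (Qtf_le_iff hs1 ⟨hp.1, hp.2⟩).mp hq
      rw [ENNReal.ofReal_le_iff_le_toReal (measure_ne_top ν _)] at h2
      exact ⟨hp.1, h2⟩
    · rintro ⟨hp0, hpβ⟩
      have hp1 : p ≤ 1 := hpβ.trans hβ1
      refine ⟨(Qtf_le_iff hs1 ⟨hp0, hp1⟩).mpr ?_, hp0, hp1⟩
      rw [ENNReal.ofReal_le_iff_le_toReal (measure_ne_top ν _)]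
      exact hpβ
  have key : unif01 (Qtf ν ⁻¹' Iic t) = unif01 (Ioc 0 β) := by
    apply le_antisymm
    · calc unif01 (Qtf ν ⁻¹' Iic t)
          ≤ unif01 ((Qtf ν ⁻¹' Iic t ∩ Ioc 0 1) ∪ (Ioc (0:ℝ) 1)ᶜ) := by
            apply measure_mono; intro p hp
            by_cases h : p ∈ Ioc (0:ℝ) 1
            · exact Or.inl ⟨hp, h⟩
            · exact Or.inr h
      _ ≤ unif01 (Qtf ν ⁻¹' Iic t ∩ Ioc 0 1) + unif01 ((Ioc (0:ℝ) 1)ᶜ) := measure_union_le _ _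
      _ = unif01 (Ioc 0 β) := by rw [hXI, unif01_compl_Ioc, add_zero]
    · rw [← hXI]; exact measure_mono inter_subset_left
  rw [key, unif01_Ioc hβ0 hβ1, hβ, ENNReal.ofReal_toReal (measure_ne_top ν _)]

lemma Qtf_integrable (hs1 : ν (Iic s) = 1) (hint : Integrable id ν) :
    Integrable (Qtf ν) unif01 := by
  have h : Integrable id (Measure.map (Qtf ν) unif01) := by rw [Qtf_map_eq hs1]; exact hint
  rw [integrable_map_measure aestronglyMeasurable_id (Qtf_measurable hs1).aemeasurable] at h
  exact h

lemma Qtf_integral (hs1 : ν (Iic s) = 1) :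
    ∫ p, Qtf ν p ∂unif01 = ∫ t, t ∂ν := by
  conv_rhs => rw [← Qtf_map_eq hs1]
  rw [show (∫ (t : ℝ), t ∂Measure.map (Qtf ν) unif01) = ∫ t, id t ∂Measure.map (Qtf ν) unif01 from rfl,
    integral_map (Qtf_measurable hs1).aemeasurable aestronglyMeasurable_id]
  rfl

end Coupling

section Core

lemma sortedVec_monotone {n : ℕ} (x : Fin n → ℝ) : Monotone (sortedVec x) :=
  Tuple.monotone_sort x

lemma sortedVec_comp_monotoneOn {n : ℕ} (x : Fin n → ℝ) (g : ℝ → ℝ) (S : Set ℝ)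
    (hg : MonotoneOn g S) (hx : ∀ i, x i ∈ S) :
    sortedVec (g ∘ x) = g ∘ sortedVec x := by
  have hmono : Monotone ((g ∘ x) ∘ ⇑(Tuple.sort x)) := by
    intro i j hij
    exact hg (hx _) (hx _) (sortedVec_monotone x hij)
  have h := (Tuple.comp_sort_eq_comp_iff_monotone (f := g ∘ x) (σ := Tuple.sort x)).mpr hmono
  unfold sortedVec
  rw [← h]
  rfl

lemma unif01_ae_Ioc : ∀ᵐ p ∂unif01, p ∈ Ioc (0:ℝ) 1 := by
  rw [ae_iff]
  exact unif01_compl_Ioc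

lemma telescope_filter {n : ℕ} (A : Fin (n+1) → ℝ) (j : Fin n) :
    ∑ i ∈ Finset.univ.filter (fun i : Fin n => j ≤ i), (A i.succ - A i.castSucc)
      = A (Fin.last n) - A j.castSucc := by
  classical
  set h : ℕ → ℝ := fun k => if hk : k ≤ n then A ⟨k, Nat.lt_succ_of_le hk⟩ else 0 with hh
  have hsucc : ∀ i : Fin n, A i.succ = h ((i : ℕ) + 1) := by
    intro i
    rw [hh]
    simp only []
    rw [dif_pos (Nat.succ_le_of_lt i.isLt)]
    congr 1
  have hcast : ∀ i : Fin n, A i.castSucc = h (i : ℕ) := by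
    intro i
    rw [hh]
    simp only []
    rw [dif_pos (le_of_lt i.isLt)]
    congr 1
  have e1 : ∑ i ∈ Finset.univ.filter (fun i : Fin n => j ≤ i), (A i.succ - A i.castSucc)
      = ∑ i : Fin n, (if (j : ℕ) ≤ (i : ℕ) then h ((i : ℕ) + 1) - h (i : ℕ) else 0) := by
    rw [Finset.sum_filter]
    apply Finset.sum_congr rfl
    intro i _
    rw [hsucc i, hcast i]
    rfl
  rw [e1, Fin.sum_univ_eq_sum_range (fun k => if (j:ℕ) ≤ k then h (k+1) - h k else 0) n]
  have e2 : ∑ k ∈ Finset.range n, (if (j:ℕ) ≤ k then h (k+1) - h k else 0)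
      = ∑ k ∈ Finset.Ico (j:ℕ) n, (h (k+1) - h k) := by
    rw [← Finset.sum_filter]
    congr 1
    ext k
    simp only [Finset.mem_filter, Finset.mem_range, Finset.mem_Ico]
    omega
  rw [e2, Finset.sum_Ico_eq_sub _ (le_of_lt j.isLt),
    Finset.sum_range_sub (fun k => h k), Finset.sum_range_sub (fun k => h k)]
  have hn : h n = A (Fin.last n) := by
    rw [hh]; simp only []; rw [dif_pos le_rfl]; rfl
  have hj : h (j:ℕ) = A j.castSucc := (hcast j).symm
  rw [hn, hj]
  ring

lemma snoc_succ_ge {n : ℕ} (z : Fin n → ℝ) (s : ℝ) (hz : Monotone z) (hzs : ∀ i, z i ≤ s)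
    (i : Fin n) : z i ≤ (Fin.snoc z s : Fin (n+1) → ℝ) i.succ := by
  rcases Fin.eq_castSucc_or_eq_last i.succ with ⟨j, hj⟩ | hl
  · rw [hj, Fin.snoc_castSucc]
    apply hz
    have hv : (i : ℕ) + 1 = (j : ℕ) := congrArg Fin.val hj
    rw [Fin.le_def]; omega
  · rw [hl, Fin.snoc_last]
    exact hzs i

lemma core_pointwise {n : ℕ} {ν : Measure ℝ} [IsProbabilityMeasure ν] {s : ℝ}
    (hs1 : ν (Iic s) = 1) (su : Fin n → ℝ) (hsu : Monotone su)
    (hmem : ∀ i, su i ∈ Ioc (0:ℝ) 1) {p : ℝ} (hp : p ∈ Ioc (0:ℝ) 1) :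
    ∑ i : Fin n, (if p ≤ su i then
        ((Fin.snoc (Qtf ν ∘ su) s : Fin (n+1) → ℝ) i.succ - (Qtf ν ∘ su) i) else 0)
      ≤ s - Qtf ν p := by
  classical
  set A : Fin (n+1) → ℝ := Fin.snoc (Qtf ν ∘ su) s with hA
  have hAc : ∀ i : Fin n, (Qtf ν ∘ su) i = A i.castSucc := by
    intro i; rw [hA, Fin.snoc_castSucc]
  have hsum : ∑ i : Fin n, (if p ≤ su i then (A i.succ - (Qtf ν ∘ su) i) else 0)
      = ∑ i ∈ Finset.univ.filter (fun i : Fin n => p ≤ su i), (A i.succ - A i.castSucc) := by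
    rw [Finset.sum_filter]
    exact Finset.sum_congr rfl fun i _ => by rw [hAc i]
  rw [hsum]
  rcases (Finset.univ.filter fun i : Fin n => p ≤ su i).eq_empty_or_nonempty with he | hne
  · rw [he, Finset.sum_empty]
    have := Qtf_le_sup hs1 hp
    linarith
  · set j := (Finset.univ.filter fun i : Fin n => p ≤ su i).min' hne with hjdef
    have hjmem := Finset.min'_mem _ hne
    have hjp : p ≤ su j := (Finset.mem_filter.mp hjmem).2
    have hK : (Finset.univ.filter fun i : Fin n => p ≤ su i)
        = Finset.univ.filter (fun i : Fin n => j ≤ i) := by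
      ext i
      simp only [Finset.mem_filter, Finset.mem_univ, true_and]
      constructor
      · intro hi
        exact Finset.min'_le _ i (Finset.mem_filter.mpr ⟨Finset.mem_univ i, hi⟩)
      · intro hi
        exact le_trans hjp (hsu hi)
    rw [hK, telescope_filter]
    have h1 : A (Fin.last n) = s := Fin.snoc_last _ _
    have h2 : A j.castSucc = Qtf ν (su j) := by rw [hA, Fin.snoc_castSucc]; rfl
    have h3 : Qtf ν p ≤ Qtf ν (su j) :=
      Qtf_monotoneOn hs1 hp.1 (hmem j).1 hjp
    rw [h1, h2]
    linarith

lemma core_ineq {n : ℕ} {ν : Measure ℝ} [IsProbabilityMeasure ν] {s : ℝ}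
    (hs1 : ν (Iic s) = 1) (hint : Integrable id ν)
    (u : Fin n → ℝ) (hu : ∀ i, u i ∈ Ioc (0:ℝ) 1) :
    ∫ t, t ∂ν ≤ inducedMean s (Qtf ν ∘ u) u := by
  classical
  set su := sortedVec u with hsu_def
  have hsu : Monotone su := sortedVec_monotone u
  have hmem : ∀ i, su i ∈ Ioc (0:ℝ) 1 := fun i => hu _
  have hQmonoIoc : MonotoneOn (Qtf ν) (Ioc (0:ℝ) 1) :=
    (Qtf_monotoneOn hs1).mono (fun p hp => hp.1)
  have hsorted : sortedVec (Qtf ν ∘ u) = Qtf ν ∘ su :=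
    sortedVec_comp_monotoneOn u (Qtf ν) (Ioc 0 1) hQmonoIoc hu
  set d : Fin n → ℝ := fun i =>
    (Fin.snoc (Qtf ν ∘ su) s : Fin (n+1) → ℝ) i.succ - (Qtf ν ∘ su) i with hd
  set f₁ : ℝ → ℝ := fun p => ∑ i : Fin n, (Ioc (0:ℝ) (su i)).indicator (fun _ => d i) p with hf₁
  set f₂ : ℝ → ℝ := fun p => s - Qtf ν p with hf₂
  have hae : ∀ᵐ p ∂unif01, f₁ p ≤ f₂ p := by
    filter_upwards [unif01_ae_Ioc] with p hp
    rw [hf₁, hf₂]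
    simp only []
    have : ∀ i : Fin n, (Ioc (0:ℝ) (su i)).indicator (fun _ => d i) p
        = if p ≤ su i then d i else 0 := by
      intro i
      rw [indicator_apply]
      congr 1
      simp only [mem_Ioc, eq_iff_iff]
      exact ⟨fun h => h.2, fun h => ⟨hp.1, h⟩⟩
    rw [Finset.sum_congr rfl (fun i _ => this i)]
    exact core_pointwise hs1 su hsu hmem hp
  have hint₁ : Integrable f₁ unif01 := by
    apply integrable_finset_sum
    intro i _
    exact (integrable_const (d i)).indicator measurableSet_Ioc
  have hint₂ : Integrable f₂ unif01 :=
    (integrable_const s).sub (Qtf_integrable hs1 hint)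
  have hI := integral_mono_ae hint₁ hint₂ hae
  have hI₁ : ∫ p, f₁ p ∂unif01 = ∑ i : Fin n, d i * su i := by
    rw [hf₁, integral_finset_sum _ (fun i _ => (integrable_const (d i)).indicator measurableSet_Ioc)]
    apply Finset.sum_congr rfl
    intro i _
    rw [integral_indicator_const (d i) measurableSet_Ioc, measureReal_def,
      unif01_Ioc (le_of_lt (hmem i).1) (hmem i).2,
      ENNReal.toReal_ofReal (le_of_lt (hmem i).1)]
    rw [smul_eq_mul, mul_comm]
  have hI₂ : ∫ p, f₂ p ∂unif01 = s - ∫ t, t ∂ν := by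
    rw [hf₂]
    simp only []
    rw [integral_sub (integrable_const s) (Qtf_integrable hs1 hint),
      integral_const, Qtf_integral hs1]
    simp [measure_univ]
  rw [hI₁, hI₂] at hI
  unfold inducedMean
  rw [hsorted]
  have : ∑ i : Fin n, sortedVec u i *
      ((Fin.snoc (Qtf ν ∘ su) s : Fin (n+1) → ℝ) i.succ - (Qtf ν ∘ su) i)
      = ∑ i : Fin n, d i * su i := by
    apply Finset.sum_congr rfl
    intro i _
    rw [hd]
    simp only []
    rw [mul_comm]
  rw [this]
  linarith

end Core

section MeasurePlumbing

lemma prod_outer_ge {X Y : Type*} [MeasurableSpace X] [MeasurableSpace Y]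
    (μ : Measure X) (κ : Measure Y) [SigmaFinite κ]
    {A : Set X} (hA : MeasurableSet A) (S : Set Y) :
    μ A * κ S ≤ (μ.prod κ) (A ×ˢ S) := by
  set W := toMeasurable (μ.prod κ) (A ×ˢ S) with hW
  have hWm : MeasurableSet W := measurableSet_toMeasurable _ _
  have hsub : A ×ˢ S ⊆ W := subset_toMeasurable _ _
  have hWi : MeasurableSet (W ∩ A ×ˢ univ) := hWm.inter (hA.prod MeasurableSet.univ)
  have hkey : ∀ x ∈ A, κ S ≤ κ (Prod.mk x ⁻¹' (W ∩ A ×ˢ univ)) := by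
    intro x hx
    apply measure_mono
    intro y hy
    exact ⟨hsub ⟨hx, hy⟩, hx, mem_univ y⟩
  calc μ A * κ S = κ S * μ A := mul_comm _ _
    _ = ∫⁻ _ in A, κ S ∂μ := (setLIntegral_const A (κ S)).symm
    _ ≤ ∫⁻ x in A, κ (Prod.mk x ⁻¹' (W ∩ A ×ˢ univ)) ∂μ := by
        apply lintegral_mono_ae
        exact (ae_restrict_iff' hA).2 (Filter.Eventually.of_forall hkey)
    _ ≤ ∫⁻ x, κ (Prod.mk x ⁻¹' (W ∩ A ×ˢ univ)) ∂μ := setLIntegral_le_lintegral _ _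
    _ = (μ.prod κ) (W ∩ A ×ˢ univ) := (Measure.prod_apply hWi).symm
    _ ≤ (μ.prod κ) W := measure_mono inter_subset_left
    _ = (μ.prod κ) (A ×ˢ S) := measure_toMeasurable _

lemma tsum_outer_le {ι X : Type*} [Countable ι] [MeasurableSpace X] (μ : Measure X)
    (A P : ι → Set X) (hP : ∀ i, MeasurableSet (P i))
    (hd : Pairwise (Function.onFun Disjoint P)) (hAP : ∀ i, A i ⊆ P i) :
    ∑' i, μ (A i) ≤ μ (⋃ i, A i) := by
  set M := toMeasurable μ (⋃ i, A i) with hM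
  have h1 : ∀ i, μ (A i) ≤ μ (M ∩ P i) := fun i => measure_mono
    (fun x hx => ⟨subset_toMeasurable _ _ (mem_iUnion.mpr ⟨i, hx⟩), hAP i hx⟩)
  calc ∑' i, μ (A i) ≤ ∑' i, μ (M ∩ P i) := ENNReal.tsum_le_tsum h1
    _ = μ (⋃ i, M ∩ P i) := by
        rw [measure_iUnion]
        · intro i j hij
          exact ((hd hij).mono inter_subset_right inter_subset_right)
        · exact fun i => (measurableSet_toMeasurable _ _).inter (hP i)
    _ ≤ μ M := measure_mono (iUnion_subset fun i => inter_subset_left)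
    _ = μ (⋃ i, A i) := measure_toMeasurable _

noncomputable def rinv (g : ℝ → ℝ) (y : ℝ) : ℝ :=
  sInf ({q | q ∈ Ioc (0:ℝ) 1 ∧ y ≤ g q} ∪ {1})

lemma rinv_set_bddBelow (g : ℝ → ℝ) (y : ℝ) :
    BddBelow ({q | q ∈ Ioc (0:ℝ) 1 ∧ y ≤ g q} ∪ {1}) := by
  refine ⟨0, fun q hq => ?_⟩
  rcases hq with ⟨hq1, _⟩ | hq
  · exact hq1.1.le
  · simp only [mem_singleton_iff] at hq
    rw [hq]; norm_num

lemma rinv_monotone (g : ℝ → ℝ) : Monotone (rinv g) := by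
  intro y y' h
  apply csInf_le_csInf (rinv_set_bddBelow g y) ⟨1, Or.inr rfl⟩
  rintro q (⟨hq1, hq2⟩ | hq)
  · exact Or.inl ⟨hq1, le_trans h hq2⟩
  · exact Or.inr hq

lemma rinv_measurable (g : ℝ → ℝ) : Measurable (rinv g) :=
  (rinv_monotone g).measurable

section Glemmas

variable {ν : Measure ℝ} [IsProbabilityMeasure ν] {g : ℝ → ℝ}

lemma lev_singleton (hgm : Measurable g) (hmap : Measure.map g unif01 = ν)
    (hmono : MonotoneOn g (Ioc (0:ℝ) 1)) {p : ℝ} (hp : p ∈ Ioc (0:ℝ) 1)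
    (h0 : ν {g p} = 0) {q : ℝ} (hq : q ∈ Ioc (0:ℝ) 1) (hgq : g q = g p) : q = p := by
  by_contra hne
  have hminmem : min q p ∈ Ioc (0:ℝ) 1 := ⟨lt_min hq.1 hp.1, le_trans (min_le_left _ _) hq.2⟩
  have hmaxmem : max q p ∈ Ioc (0:ℝ) 1 := ⟨lt_of_lt_of_le hq.1 (le_max_left _ _), max_le hq.2 hp.2⟩
  have hgmin : g (min q p) = g p := by
    rcases min_choice q p with h | h
    · rw [h]; exact hgq
    · rw [h]
  have hgmax : g (max q p) = g p := by
    rcases max_choice q p with h | h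
    · rw [h]; exact hgq
    · rw [h]
  have key : Icc (min q p) (max q p) ⊆ g ⁻¹' {g p} := by
    intro r hr
    have hrIoc : r ∈ Ioc (0:ℝ) 1 :=
      ⟨lt_of_lt_of_le hminmem.1 hr.1, le_trans hr.2 hmaxmem.2⟩
    have h1 : g (min q p) ≤ g r := hmono hminmem hrIoc hr.1
    have h2 : g r ≤ g (max q p) := hmono hrIoc hmaxmem hr.2
    rw [hgmin] at h1; rw [hgmax] at h2
    exact le_antisymm h2 h1
  have hsub : Icc (min q p) (max q p) ⊆ Icc (0:ℝ) 1 := by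
    intro r hr
    exact ⟨le_trans hminmem.1.le hr.1, le_trans hr.2 hmaxmem.2⟩
  have hvol : unif01 (Icc (min q p) (max q p)) = ENNReal.ofReal (max q p - min q p) := by
    rw [unif01, Measure.restrict_apply measurableSet_Icc,
      inter_eq_self_of_subset_left hsub, Real.volume_Icc]
  have hlt : (0:ENNReal) < unif01 (Icc (min q p) (max q p)) := by
    rw [hvol]
    apply ENNReal.ofReal_pos.mpr
    have : min q p < max q p := min_lt_max.mpr hne
    linarith
  have : ν {g p} = unif01 (g ⁻¹' {g p}) := by
    rw [← hmap, Measure.map_apply hgm (measurableSet_singleton _)]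
  rw [this] at h0
  exact absurd (measure_mono_null key h0) (ne_of_gt (lt_of_lt_of_le hlt (measure_mono (subset_trans (fun r hr => hr) (fun r hr => hr)))))

lemma rinv_eq (hgm : Measurable g) (hmap : Measure.map g unif01 = ν)
    (hmono : MonotoneOn g (Ioc (0:ℝ) 1)) {p : ℝ} (hp : p ∈ Ioc (0:ℝ) 1)
    (h0 : ν {g p} = 0) : rinv g (g p) = p := by
  apply le_antisymm
  · exact csInf_le (rinv_set_bddBelow g (g p)) (Or.inl ⟨hp, le_rfl⟩)
  · apply le_csInf ⟨(1:ℝ), Or.inr rfl⟩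
    rintro q (⟨hq1, hq2⟩ | hq)
    · by_contra hlt
      push_neg at hlt
      have h1 : g q ≤ g p := hmono hq1 hp hlt.le
      have h2 : g q = g p := le_antisymm h1 hq2
      exact absurd (lev_singleton hgm hmap hmono hp h0 hq1 h2) (ne_of_lt hlt)
    · simp only [mem_singleton_iff] at hq
      rw [hq]; exact hp.2

def gJset (ν : Measure ℝ) (g : ℝ → ℝ) : Set ℝ :=
  {y | ν {y} = 0 ∧ rinv g y ∈ Ioc (0:ℝ) 1 ∧ g (rinv g y) = y}

lemma atomset_countable (ν : Measure ℝ) [IsProbabilityMeasure ν] :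
    Set.Countable {y : ℝ | ν {y} ≠ 0} := by
  have h := Measure.countable_meas_level_set_pos (μ := ν) (g := fun t : ℝ => t) measurable_id
  apply Set.Countable.mono _ h
  intro y hy
  simp only [mem_setOf_eq] at hy ⊢
  have : {a : ℝ | a = y} = {y} := by ext a; simp
  rw [this]
  exact pos_iff_ne_zero.mpr hy

lemma gJset_measurable (hgm : Measurable g) : MeasurableSet (gJset ν g) := by
  have h1 : MeasurableSet {y : ℝ | ν {y} = 0} := by
    have hc : MeasurableSet {y : ℝ | ν {y} ≠ 0} := (atomset_countable ν).measurableSet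
    have : {y : ℝ | ν {y} = 0} = {y : ℝ | ν {y} ≠ 0}ᶜ := by
      ext y; simp [mem_compl_iff]
    rw [this]
    exact hc.compl
  have h2 : MeasurableSet (rinv g ⁻¹' Ioc (0:ℝ) 1) := (rinv_measurable g) measurableSet_Ioc
  have h3 : MeasurableSet {y : ℝ | g (rinv g y) = y} :=
    measurableSet_eq_fun (hgm.comp (rinv_measurable g)) measurable_id
  have : gJset ν g = {y : ℝ | ν {y} = 0} ∩ (rinv g ⁻¹' Ioc (0:ℝ) 1) ∩ {y : ℝ | g (rinv g y) = y} := by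
    ext y
    simp only [gJset, mem_setOf_eq, mem_inter_iff, mem_preimage]
    tauto
  rw [this]
  exact (h1.inter h2).inter h3

lemma cover_lemma (hgm : Measurable g) (hmap : Measure.map g unif01 = ν)
    (hmono : MonotoneOn g (Ioc (0:ℝ) 1)) {p : ℝ} (hp : p ∈ Ioc (0:ℝ) 1) :
    g p ∈ {y : ℝ | ν {y} ≠ 0} ∪ gJset ν g := by
  by_cases h0 : ν {g p} = 0
  · right
    have := rinv_eq hgm hmap hmono hp h0
    exact ⟨h0, by rw [this]; exact hp, by rw [this]⟩
  · exact Or.inl h0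

lemma bad_null (hgm : Measurable g) (hmap : Measure.map g unif01 = ν)
    (hmono : MonotoneOn g (Ioc (0:ℝ) 1)) :
    ν (({y : ℝ | ν {y} ≠ 0} ∪ gJset ν g)ᶜ) = 0 := by
  have hmeas : MeasurableSet (({y : ℝ | ν {y} ≠ 0} ∪ gJset ν g)ᶜ) :=
    ((atomset_countable ν).measurableSet.union (gJset_measurable hgm)).compl
  have hma := Measure.map_apply (μ := unif01) hgm hmeas
  rw [hmap] at hma
  rw [hma]
  apply measure_mono_null _ unif01_compl_Ioc
  intro p hp
  simp only [mem_preimage, mem_compl_iff] at hp ⊢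
  intro hpIoc
  exact hp (cover_lemma hgm hmap hmono hpIoc)

end Glemmas

end MeasurePlumbing

section OneCoord

lemma oneCoord {Y : Type*} [MeasurableSpace Y] {ν : Measure ℝ} [IsProbabilityMeasure ν]
    {g : ℝ → ℝ} (hgm : Measurable g) (hmap : Measure.map g unif01 = ν)
    (hmono : MonotoneOn g (Ioc (0:ℝ) 1))
    (κ : Measure Y) [IsFiniteMeasure κ] (B : Set (ℝ × Y)) :
    (ν.prod κ) B ≤
      (unif01.prod κ) ((Prod.map g (id : Y → Y)) ⁻¹' B ∩ Ioc (0:ℝ) 1 ×ˢ univ) := by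
  classical
  have hΨm : Measurable (Prod.map g (id : Y → Y)) :=
    (hgm.comp measurable_fst).prodMk measurable_snd
  have hprod : ν.prod κ = Measure.map (Prod.map g (id : Y → Y)) (unif01.prod κ) := by
    rw [← Measure.map_prod_map _ _ hgm measurable_id, Measure.map_id, hmap]
  set Vat := {y : ℝ | ν {y} ≠ 0} with hVat
  have hVc : Set.Countable Vat := atomset_countable ν
  haveI : Countable ↥Vat := hVc.to_subtype
  set T := (Prod.map g (id : Y → Y)) ⁻¹' B ∩ Ioc (0:ℝ) 1 ×ˢ univ with hT
  set piece : Option ↥Vat → Set (ℝ × Y) := fun o =>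
    Option.rec ((Prod.map g (id : Y → Y)) ⁻¹' (B ∩ (gJset ν g) ×ˢ univ) ∩ Ioc (0:ℝ) 1 ×ˢ univ)
      (fun v => ((Ioc (0:ℝ) 1 ∩ g ⁻¹' {v.1}) ×ˢ {y : Y | (v.1, y) ∈ B})) o with hpiece
  set seps : Option ↥Vat → Set (ℝ × Y) := fun o =>
    Option.rec ((Ioc (0:ℝ) 1 ∩ g ⁻¹' (gJset ν g)) ×ˢ (univ : Set Y))
      (fun v => ((Ioc (0:ℝ) 1 ∩ g ⁻¹' {v.1}) ×ˢ (univ : Set Y))) o with hseps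
  set Bpart : Option ↥Vat → Set (ℝ × Y) := fun o =>
    Option.rec (B ∩ (gJset ν g) ×ˢ univ) (fun v => B ∩ ({v.1} ×ˢ (univ : Set Y))) o with hBpart
  have hbad : (ν.prod κ) ((Vat ∪ gJset ν g)ᶜ ×ˢ (univ : Set Y)) = 0 := by
    rw [Measure.prod_prod, bad_null hgm hmap hmono, zero_mul]
  have hcover : B ⊆ (⋃ o, Bpart o) ∪ (Vat ∪ gJset ν g)ᶜ ×ˢ (univ : Set Y) := by
    rintro ⟨y, z⟩ hyz
    by_cases hy : y ∈ Vat ∪ gJset ν g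
    · left
      rcases hy with hy | hy
      · exact mem_iUnion.mpr ⟨some ⟨y, hy⟩, hyz, rfl, mem_univ z⟩
      · exact mem_iUnion.mpr ⟨none, hyz, hy, mem_univ z⟩
    · exact Or.inr ⟨hy, mem_univ z⟩
  have hatom_meas : ∀ v : ↥Vat, MeasurableSet (Ioc (0:ℝ) 1 ∩ g ⁻¹' {v.1}) :=
    fun v => measurableSet_Ioc.inter (hgm (measurableSet_singleton _))
  have hatomeq : ∀ v : ↥Vat, ν {v.1} = unif01 (Ioc (0:ℝ) 1 ∩ g ⁻¹' {v.1}) := by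
    intro v
    have h1 : ν {v.1} = unif01 (g ⁻¹' {v.1}) := by
      have := Measure.map_apply (μ := unif01) hgm (measurableSet_singleton v.1)
      rw [hmap] at this
      exact this
    rw [h1]
    apply le_antisymm
    · calc unif01 (g ⁻¹' {v.1})
          ≤ unif01 ((Ioc (0:ℝ) 1 ∩ g ⁻¹' {v.1}) ∪ (Ioc (0:ℝ) 1)ᶜ) := by
            apply measure_mono
            intro p hp
            by_cases h : p ∈ Ioc (0:ℝ) 1
            · exact Or.inl ⟨h, hp⟩
            · exact Or.inr h
      _ ≤ unif01 (Ioc (0:ℝ) 1 ∩ g ⁻¹' {v.1}) + unif01 ((Ioc (0:ℝ) 1)ᶜ) := measure_union_le _ _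
      _ = unif01 (Ioc (0:ℝ) 1 ∩ g ⁻¹' {v.1}) := by rw [unif01_compl_Ioc, add_zero]
    · exact measure_mono inter_subset_right
  have hbound : ∀ o, (ν.prod κ) (Bpart o) ≤ (unif01.prod κ) (piece o) := by
    rintro (_ | v)
    · -- none case
      set E := toMeasurable (unif01.prod κ) (piece none) with hE
      have hEm : MeasurableSet E := measurableSet_toMeasurable _ _
      have hEsub : piece none ⊆ E := subset_toMeasurable _ _
      set C := (Prod.map (rinv g) (id : Y → Y)) ⁻¹' E ∩ (gJset ν g) ×ˢ (univ : Set Y) with hC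
      have hCm : MeasurableSet C :=
        (((rinv_measurable g).comp measurable_fst).prodMk measurable_snd hEm).inter
          ((gJset_measurable hgm).prod MeasurableSet.univ)
      have hBC : Bpart none ⊆ C := by
        rintro ⟨y, z⟩ ⟨hyzB, hygJ, -⟩
        refine ⟨?_, hygJ, mem_univ z⟩
        apply hEsub
        have hmem : Prod.map g (id : Y → Y) (rinv g y, z) = (y, z) := by
          show (g (rinv g y), z) = (y, z)
          rw [hygJ.2.2]
        refine ⟨?_, hygJ.2.1, mem_univ z⟩
        show Prod.map g (id : Y → Y) (rinv g y, z) ∈ B ∩ (gJset ν g) ×ˢ univ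
        rw [hmem]
        exact ⟨hyzB, hygJ, mem_univ z⟩
      have hCval : (ν.prod κ) C = (unif01.prod κ) ((Prod.map g (id : Y → Y)) ⁻¹' C) := by
        rw [hprod, Measure.map_apply hΨm hCm]
      have hsub2 : (Prod.map g (id : Y → Y)) ⁻¹' C ⊆ E ∪ (Ioc (0:ℝ) 1)ᶜ ×ˢ (univ : Set Y) := by
        rintro ⟨p, z⟩ ⟨hPE, hgJ, -⟩
        by_cases hpIoc : p ∈ Ioc (0:ℝ) 1
        · left
          have h0 : ν {g p} = 0 := hgJ.1
          have : rinv g (g p) = p := rinv_eq hgm hmap hmono hpIoc h0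
          have hPE' : (rinv g (g p), z) ∈ E := hPE
          rwa [this] at hPE'
        · exact Or.inr ⟨hpIoc, mem_univ z⟩
      calc (ν.prod κ) (Bpart none) ≤ (ν.prod κ) C := measure_mono hBC
        _ = (unif01.prod κ) ((Prod.map g (id : Y → Y)) ⁻¹' C) := hCval
        _ ≤ (unif01.prod κ) (E ∪ (Ioc (0:ℝ) 1)ᶜ ×ˢ (univ : Set Y)) := measure_mono hsub2
        _ ≤ (unif01.prod κ) E + (unif01.prod κ) ((Ioc (0:ℝ) 1)ᶜ ×ˢ (univ : Set Y)) :=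
            measure_union_le _ _
        _ = (unif01.prod κ) E := by
            rw [Measure.prod_prod, unif01_compl_Ioc, zero_mul, add_zero]
        _ = (unif01.prod κ) (piece none) := measure_toMeasurable _
    · -- some v case
      have h1 : Bpart (some v) ⊆ {v.1} ×ˢ {y : Y | (v.1, y) ∈ B} := by
        rintro ⟨p, z⟩ ⟨hB, hp, -⟩
        have : p = v.1 := hp
        exact ⟨this, by rw [mem_setOf_eq, ← this]; exact hB⟩
      calc (ν.prod κ) (Bpart (some v))
          ≤ (ν.prod κ) ({v.1} ×ˢ {y : Y | (v.1, y) ∈ B}) := measure_mono h1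
        _ ≤ (ν.prod κ) ({v.1} ×ˢ toMeasurable κ {y : Y | (v.1, y) ∈ B}) :=
            measure_mono (prod_mono_right (subset_toMeasurable _ _))
        _ = ν {v.1} * κ (toMeasurable κ {y : Y | (v.1, y) ∈ B}) := by rw [Measure.prod_prod]
        _ = unif01 (Ioc (0:ℝ) 1 ∩ g ⁻¹' {v.1}) * κ {y : Y | (v.1, y) ∈ B} := by
            rw [hatomeq v, measure_toMeasurable]
        _ ≤ (unif01.prod κ) ((Ioc (0:ℝ) 1 ∩ g ⁻¹' {v.1}) ×ˢ {y : Y | (v.1, y) ∈ B}) :=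
            prod_outer_ge unif01 κ (hatom_meas v) _
        _ = (unif01.prod κ) (piece (some v)) := rfl
  have hps : ∀ o, piece o ⊆ seps o := by
    rintro (_ | v)
    · rintro ⟨p, z⟩ ⟨⟨-, hgJ⟩, hpIoc, -⟩
      exact ⟨⟨hpIoc, hgJ.1⟩, mem_univ z⟩
    · rintro ⟨p, z⟩ ⟨hp, -⟩
      exact ⟨hp, mem_univ z⟩
  have hsepm : ∀ o, MeasurableSet (seps o) := by
    rintro (_ | v)
    · exact (measurableSet_Ioc.inter (hgm (gJset_measurable hgm))).prod MeasurableSet.univ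
    · exact (hatom_meas v).prod MeasurableSet.univ
  have hsepd : Pairwise (Function.onFun Disjoint seps) := by
    rintro (_ | v) (_ | w) hne
    · exact absurd rfl hne
    · rw [Function.onFun, Set.disjoint_left]
      rintro ⟨p, z⟩ ⟨⟨-, hgJ⟩, -⟩ ⟨⟨-, hv⟩, -⟩
      have h0 : ν {g p} = 0 := hgJ.1
      have : g p = w.1 := hv
      exact w.2 (by rwa [this] at h0)
    · rw [Function.onFun, Set.disjoint_left]
      rintro ⟨p, z⟩ ⟨⟨-, hv⟩, -⟩ ⟨⟨-, hgJ⟩, -⟩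
      have h0 : ν {g p} = 0 := hgJ.1
      have : g p = v.1 := hv
      exact v.2 (by rwa [this] at h0)
    · rw [Function.onFun, Set.disjoint_left]
      rintro ⟨p, z⟩ ⟨⟨-, hv⟩, -⟩ ⟨⟨-, hw⟩, -⟩
      have h1 : g p = v.1 := hv
      have h2 : g p = w.1 := hw
      apply hne
      congr 1
      exact Subtype.ext (h1 ▸ h2)
  have hpT : ∀ o, piece o ⊆ T := by
    rintro (_ | v)
    · rintro ⟨p, z⟩ ⟨⟨hB, -⟩, hIoc⟩
      exact ⟨hB, hIoc⟩
    · rintro ⟨p, z⟩ ⟨⟨hpIoc, hpv⟩, hz⟩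
      have : g p = v.1 := hpv
      refine ⟨?_, hpIoc, mem_univ z⟩
      show (g p, z) ∈ B
      rw [this]; exact hz
  calc (ν.prod κ) B
      ≤ (ν.prod κ) ((⋃ o, Bpart o) ∪ (Vat ∪ gJset ν g)ᶜ ×ˢ (univ : Set Y)) :=
        measure_mono hcover
    _ ≤ (ν.prod κ) (⋃ o, Bpart o) + (ν.prod κ) ((Vat ∪ gJset ν g)ᶜ ×ˢ (univ : Set Y)) :=
        measure_union_le _ _
    _ = (ν.prod κ) (⋃ o, Bpart o) := by rw [hbad, add_zero]
    _ ≤ ∑' o, (ν.prod κ) (Bpart o) := measure_iUnion_le _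
    _ ≤ ∑' o, (unif01.prod κ) (piece o) := ENNReal.tsum_le_tsum hbound
    _ ≤ (unif01.prod κ) (⋃ o, piece o) := tsum_outer_le _ piece seps hsepm hsepd hps
    _ ≤ (unif01.prod κ) T := measure_mono (iUnion_subset hpT)

end OneCoord

section Crux

lemma crux_step {m : ℕ} {ν : Measure ℝ} [IsProbabilityMeasure ν] {g : ℝ → ℝ}
    (hgm : Measurable g) (hmap : Measure.map g unif01 = ν)
    (hmono : MonotoneOn g (Ioc (0:ℝ) 1))
    (S : Finset (Fin (m+1))) (i : Fin (m+1)) (hiS : i ∉ S) (B : Set (Fin (m+1) → ℝ)) :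
    (Measure.pi fun j => if j ∈ S then unif01 else ν)
        ((fun u (j : Fin (m+1)) => if j ∈ S then g (u j) else u j) ⁻¹' B
          ∩ {u | ∀ j ∈ S, u j ∈ Ioc (0:ℝ) 1})
      ≤ (Measure.pi fun j => if j ∈ insert i S then unif01 else ν)
        ((fun u (j : Fin (m+1)) => if j ∈ insert i S then g (u j) else u j) ⁻¹' B
          ∩ {u | ∀ j ∈ insert i S, u j ∈ Ioc (0:ℝ) 1}) := by
  classical
  set famS : Fin (m+1) → Measure ℝ := fun j => if j ∈ S then unif01 else ν with hfamS
  set famS' : Fin (m+1) → Measure ℝ := fun j => if j ∈ insert i S then unif01 else ν with hfamS'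
  haveI hP1 : ∀ j, IsProbabilityMeasure (famS j) := by
    intro j; rw [hfamS]; dsimp only; split <;> infer_instance
  haveI hP2 : ∀ j, IsProbabilityMeasure (famS' j) := by
    intro j; rw [hfamS']; dsimp only; split <;> infer_instance
  set κ : Measure (Fin m → ℝ) := Measure.pi (fun j => famS (i.succAbove j)) with hκ
  haveI hPκ : IsProbabilityMeasure κ := by
    rw [hκ]; infer_instance
  set e := MeasurableEquiv.piFinSuccAbove (fun _ : Fin (m+1) => ℝ) i with he
  have hMP1 : Measure.map e (Measure.pi famS) = ν.prod κ := by
    have h := (measurePreserving_piFinSuccAbove famS i).map_eq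
    have hfi : famS i = ν := by rw [hfamS]; exact if_neg hiS
    rw [hfi] at h
    exact h
  have hMP2 : Measure.map e (Measure.pi famS') = unif01.prod κ := by
    have h := (measurePreserving_piFinSuccAbove famS' i).map_eq
    have hfi : famS' i = unif01 := by rw [hfamS']; exact if_pos (Finset.mem_insert_self i S)
    have hκeq : (Measure.pi fun j => famS' (i.succAbove j)) = κ := by
      rw [hκ]
      congr 1
      funext j
      rw [hfamS, hfamS']
      dsimp only
      have : i.succAbove j ∈ insert i S ↔ i.succAbove j ∈ S :=
        Finset.mem_insert.trans (or_iff_right (i.succAbove_ne j))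
      by_cases hj : i.succAbove j ∈ S
      · rw [if_pos hj, if_pos (this.mpr hj)]
      · rw [if_neg hj, if_neg (fun hin => hj (this.mp hin))]
    rw [hfi, hκeq] at h
    exact h
  have htrans1 : ∀ X : Set (Fin (m+1) → ℝ), Measure.pi famS X = (ν.prod κ) (e.symm ⁻¹' X) := by
    intro X
    rw [← hMP1, MeasurableEquiv.map_apply]
    congr 1
    rw [← Set.preimage_comp]
    simp
  have htrans2 : ∀ X : Set (Fin (m+1) → ℝ), Measure.pi famS' X = (unif01.prod κ) (e.symm ⁻¹' X) := by
    intro X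
    rw [← hMP2, MeasurableEquiv.map_apply]
    congr 1
    rw [← Set.preimage_comp]
    simp
  set XS := (fun (u : Fin (m+1) → ℝ) (j : Fin (m+1)) => if j ∈ S then g (u j) else u j) ⁻¹' B
      ∩ {u : Fin (m+1) → ℝ | ∀ j ∈ S, u j ∈ Ioc (0:ℝ) 1} with hXS
  set XS' := (fun (u : Fin (m+1) → ℝ) (j : Fin (m+1)) => if j ∈ insert i S then g (u j) else u j) ⁻¹' B
      ∩ {u : Fin (m+1) → ℝ | ∀ j ∈ insert i S, u j ∈ Ioc (0:ℝ) 1} with hXS'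
  rw [htrans1 XS, htrans2 XS']
  have hOC := oneCoord (Y := Fin m → ℝ) hgm hmap hmono κ (e.symm ⁻¹' XS)
  apply le_trans hOC
  apply measure_mono
  rintro ⟨p, w⟩ ⟨h1, hp, -⟩
  -- h1 : e.symm (g p, w) ∈ XS
  have hsymm : ∀ (a : ℝ) (w' : Fin m → ℝ), e.symm (a, w') = i.insertNth a w' := by
    intro a w'
    rfl
  rw [mem_preimage] at h1 ⊢
  rw [mem_preimage] at h1
  rw [hsymm] at h1 ⊢
  obtain ⟨h1B, h1good⟩ := h1
  constructor
  · rw [mem_preimage] at h1B ⊢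
    have hfun : (fun j : Fin (m+1) => if j ∈ insert i S then g ((i.insertNth p w : Fin (m+1) → ℝ) j)
        else (i.insertNth p w : Fin (m+1) → ℝ) j)
        = (fun j : Fin (m+1) => if j ∈ S then g ((i.insertNth (g p) (id w) : Fin (m+1) → ℝ) j)
        else (i.insertNth (g p) (id w) : Fin (m+1) → ℝ) j) := by
      funext j
      by_cases hj : j = i
      · subst hj
        rw [if_pos (Finset.mem_insert_self j S), if_neg hiS]
        rw [Fin.insertNth_apply_same, Fin.insertNth_apply_same]
      · obtain ⟨j', rfl⟩ := Fin.exists_succAbove_eq (Ne.symm (fun h => hj h.symm))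
        rw [Fin.insertNth_apply_succAbove, Fin.insertNth_apply_succAbove]
        have hmem : i.succAbove j' ∈ insert i S ↔ i.succAbove j' ∈ S :=
          Finset.mem_insert.trans (or_iff_right (i.succAbove_ne j'))
        by_cases hjS : i.succAbove j' ∈ S
        · rw [if_pos (hmem.mpr hjS), if_pos hjS]; rfl
        · rw [if_neg (fun hin => hjS (hmem.mp hin)), if_neg hjS]; rfl
    rw [hfun]
    exact h1B
  · intro j hj
    rcases Finset.mem_insert.mp hj with rfl | hjS
    · rw [Fin.insertNth_apply_same]
      exact hp
    · have hjne : j ≠ i := fun h => hiS (h ▸ hjS)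
      obtain ⟨j', rfl⟩ := Fin.exists_succAbove_eq hjne
      rw [Fin.insertNth_apply_succAbove]
      have := h1good _ hjS
      rwa [Fin.insertNth_apply_succAbove] at this

end Crux

section CruxFull

lemma crux {n : ℕ} {ν : Measure ℝ} [IsProbabilityMeasure ν] {g : ℝ → ℝ}
    (hgm : Measurable g) (hmap : Measure.map g unif01 = ν)
    (hmono : MonotoneOn g (Ioc (0:ℝ) 1)) (B : Set (Fin n → ℝ)) :
    (Measure.pi fun _ : Fin n => ν) B ≤
      unifPi n ((fun u (j : Fin n) => g (u j)) ⁻¹' B ∩ {u | ∀ j, u j ∈ Ioc (0:ℝ) 1}) := by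
  classical
  have main : ∀ S : Finset (Fin n), (Measure.pi fun _ : Fin n => ν) B ≤
      (Measure.pi fun j => if j ∈ S then unif01 else ν)
        ((fun (u : Fin n → ℝ) (j : Fin n) => if j ∈ S then g (u j) else u j) ⁻¹' B
          ∩ {u : Fin n → ℝ | ∀ j ∈ S, u j ∈ Ioc (0:ℝ) 1}) := by
    intro S
    induction S using Finset.induction_on with
    | empty =>
      have h1 : (fun j : Fin n => if j ∈ (∅ : Finset (Fin n)) then unif01 else ν)
          = fun _ => ν := by funext j; simp
      have h2 : ((fun (u : Fin n → ℝ) (j : Fin n) =>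
            if j ∈ (∅ : Finset (Fin n)) then g (u j) else u j) ⁻¹' B
          ∩ {u : Fin n → ℝ | ∀ j ∈ (∅ : Finset (Fin n)), u j ∈ Ioc (0:ℝ) 1}) = B := by
        ext u
        simp
      rw [h1, h2]
    | @insert i S hiS ih =>
      refine le_trans ih ?_
      cases n with
      | zero => exact i.elim0
      | succ m => exact crux_step hgm hmap hmono S i hiS B
  have huniv := main Finset.univ
  have h1 : (fun j : Fin n => if j ∈ (Finset.univ : Finset (Fin n)) then unif01 else ν)
      = fun _ => unif01 := by funext j; simp
  have h2 : ((fun (u : Fin n → ℝ) (j : Fin n) =>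
        if j ∈ (Finset.univ : Finset (Fin n)) then g (u j) else u j) ⁻¹' B
      ∩ {u : Fin n → ℝ | ∀ j ∈ (Finset.univ : Finset (Fin n)), u j ∈ Ioc (0:ℝ) 1})
      = ((fun u (j : Fin n) => g (u j)) ⁻¹' B ∩ {u | ∀ j, u j ∈ Ioc (0:ℝ) 1}) := by
    ext u
    simp
  rw [h1, h2] at huniv
  exact huniv

end CruxFull

section Assembly

lemma nu_Iic_sSup {D : Set ℝ} (hbdd : BddAbove D) {ν : Measure ℝ} [IsProbabilityMeasure ν]
    (hsupp : ∀ᵐ t ∂ν, t ∈ D) : ν (Iic (sSup D)) = 1 := by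
  have h : ∀ᵐ t ∂ν, t ∈ Iic (sSup D) := hsupp.mono (fun t ht => le_csSup hbdd ht)
  have hc : ν ((Iic (sSup D))ᶜ) = 0 := ae_iff.mp h
  exact (prob_compl_eq_zero_iff measurableSet_Iic).mp hc

lemma inducedMean_le_sup {n : ℕ} {D : Set ℝ} (hbdd : BddAbove D) (z u : Fin n → ℝ)
    (hz : ∀ i, z i ∈ D) (hu : ∀ i, 0 ≤ u i) : inducedMean (sSup D) z u ≤ sSup D := by
  unfold inducedMean
  have hterm : ∀ i : Fin n, 0 ≤ sortedVec u i *
      ((Fin.snoc (sortedVec z) (sSup D) : Fin (n+1) → ℝ) i.succ - sortedVec z i) := by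
    intro i
    apply mul_nonneg (hu _)
    have h := snoc_succ_ge (sortedVec z) (sSup D) (sortedVec_monotone z)
      (fun j => le_csSup hbdd (hz _)) i
    linarith
  have hsum : 0 ≤ ∑ i : Fin n, sortedVec u i *
      ((Fin.snoc (sortedVec z) (sSup D) : Fin (n+1) → ℝ) i.succ - sortedVec z i) :=
    Finset.sum_nonneg (fun i _ => hterm i)
  linarith

lemma mu_le_bfun {n : ℕ} {D : Set ℝ} (hbdd : BddAbove D) {ν : Measure ℝ}
    [IsProbabilityMeasure ν] (hs1 : ν (Iic (sSup D)) = 1) (hint : Integrable id ν)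
    (T : (Fin n → ℝ) → ℝ) (x u : Fin n → ℝ) (hu : ∀ i, u i ∈ Ioc (0:ℝ) 1)
    (hz : Qtf ν ∘ u ∈ SsetD D T x) :
    ∫ t, t ∂ν ≤ bfun D T x u := by
  have h1 := core_ineq hs1 hint u hu
  apply le_trans h1
  unfold bfun
  apply le_csSup
  · refine ⟨sSup D, ?_⟩
    rintro y ⟨z', hz', rfl⟩
    exact inducedMean_le_sup hbdd z' u hz'.1 (fun i => (hu i).1.le)
  · exact ⟨Qtf ν ∘ u, hz, rfl⟩

end Assembly

/-- `P_X(P_U(b_{D,T}(X,U) ≥ μ) ≤ α) ≤ P_X(P_Z(T(Z) ≤ T(X)) ≤ α)`,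
where `X, Z` are i.i.d. samples from `ν` (supported on `D`, mean `μ`) and `U` is
an i.i.d. Uniform(0,1) sample; the inner probabilities are over `U` resp. `Z`
with `X` fixed. -/
theorem stmt5 {n : ℕ} (D : Set ℝ) (hD : D.Nonempty) (hbdd : BddAbove D)
    (ν : Measure ℝ) [IsProbabilityMeasure ν] (hsupp : ∀ᵐ t ∂ν, t ∈ D)
    (hint : Integrable id ν) (μmean : ℝ) (hmean : μmean = ∫ t, t ∂ν)
    (T : (Fin n → ℝ) → ℝ) (α : ℝ) (hα : α ∈ Set.Ioo (0:ℝ) 1) :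
    (Measure.pi fun _ : Fin n => ν)
        {x | unifPi n {u | μmean ≤ bfun D T x u} ≤ ENNReal.ofReal α}
      ≤ (Measure.pi fun _ : Fin n => ν)
        {x | (Measure.pi fun _ : Fin n => ν) {z | T z ≤ T x} ≤ ENNReal.ofReal α} := by
  classical
  have hs1 : ν (Iic (sSup D)) = 1 := nu_Iic_sSup hbdd hsupp
  have hgm : Measurable (Qtf ν) := Qtf_measurable hs1
  have hmapQ : Measure.map (Qtf ν) unif01 = ν := Qtf_map_eq hs1
  have hmonoQ : MonotoneOn (Qtf ν) (Ioc (0:ℝ) 1) :=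
    (Qtf_monotoneOn hs1).mono (fun p hp => hp.1)
  obtain ⟨N, hDN, hNm, hN0⟩ :=
    exists_measurable_superset_of_null (ae_iff.mp hsupp)
  apply measure_mono
  intro x hx
  simp only [mem_setOf_eq] at hx ⊢
  refine le_trans ?_ hx
  set A := {z : Fin n → ℝ | T z ≤ T x} ∩ {z : Fin n → ℝ | ∀ i, z i ∉ N} with hA
  have hbox : ∀ i : Fin n, (Measure.pi fun _ : Fin n => ν) {z : Fin n → ℝ | z i ∈ N} = 0 := by
    intro i
    have hseteq : {z : Fin n → ℝ | z i ∈ N}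
        = Set.pi univ (fun j => if j = i then N else univ) := by
      ext z
      simp only [mem_setOf_eq, mem_pi, mem_univ, forall_true_left]
      constructor
      · intro h j
        by_cases hj : j = i
        · subst hj; rw [if_pos rfl]; exact h
        · rw [if_neg hj]; exact mem_univ _
      · intro h
        have := h i
        rwa [if_pos rfl] at this
    rw [hseteq, Measure.pi_pi]
    apply Finset.prod_eq_zero (Finset.mem_univ i)
    rw [if_pos rfl]
    exact hN0
  have step1 : (Measure.pi fun _ : Fin n => ν) {z : Fin n → ℝ | T z ≤ T x}
      ≤ (Measure.pi fun _ : Fin n => ν) A := by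
    calc (Measure.pi fun _ : Fin n => ν) {z : Fin n → ℝ | T z ≤ T x}
        ≤ (Measure.pi fun _ : Fin n => ν) (A ∪ ⋃ i : Fin n, {z : Fin n → ℝ | z i ∈ N}) := by
          apply measure_mono
          intro z hz
          by_cases hzN : ∀ i, z i ∉ N
          · exact Or.inl ⟨hz, hzN⟩
          · push_neg at hzN
            obtain ⟨i, hi⟩ := hzN
            exact Or.inr (mem_iUnion.mpr ⟨i, hi⟩)
      _ ≤ (Measure.pi fun _ : Fin n => ν) A
          + (Measure.pi fun _ : Fin n => ν) (⋃ i : Fin n, {z : Fin n → ℝ | z i ∈ N}) :=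
          measure_union_le _ _
      _ = (Measure.pi fun _ : Fin n => ν) A := by
          rw [measure_iUnion_null (fun i => hbox i), add_zero]
  have step2 := crux (n := n) hgm hmapQ hmonoQ A
  have step3 : ((fun u (j : Fin n) => Qtf ν (u j)) ⁻¹' A ∩ {u | ∀ j, u j ∈ Ioc (0:ℝ) 1})
      ⊆ {u : Fin n → ℝ | μmean ≤ bfun D T x u} := by
    rintro u ⟨hpre, hgood⟩
    simp only [mem_setOf_eq]
    rw [hmean]
    apply mu_le_bfun hbdd hs1 hint T x u hgood
    obtain ⟨hT, hND⟩ := hpre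
    refine ⟨fun i => ?_, hT⟩
    by_contra hnotD
    exact hND i (hDN hnotD)
  calc (Measure.pi fun _ : Fin n => ν) {z : Fin n → ℝ | T z ≤ T x}
      ≤ (Measure.pi fun _ : Fin n => ν) A := step1
    _ ≤ unifPi n ((fun u (j : Fin n) => Qtf ν (u j)) ⁻¹' A ∩ {u | ∀ j, u j ∈ Ioc (0:ℝ) 1}) :=
        step2
    _ ≤ unifPi n {u : Fin n → ℝ | μmean ≤ bfun D T x u} := measure_mono step3
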